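/- Let h = k ⊕ k be the direct sum of two copies of the two-dimensional non-abelian Lie algebra, with basis e₁,e₂,e₃,e₄ and nonzero brackets [e₁,e₂]=e₂, [e₃,e₄]=e₄. Then the alternating bilinear form ω on h with ω(e₁,e₃)=1 and all other basis pairings zero is a 2-cocycle with trivial coefficients ℝ which is not a coboundary; in particular H²(h,ℝ) ≠ {0}. -/

import Mathlib

/-- Let `h = k ⊕ k` be the 4-dimensional real Lie algebra with
basis `e₁,…,e₄` and nonzero brackets `⁅e₁,e₂⁆ = e₂`, `⁅e₃,e₄⁆ = e₄` (all other
basis brackets zero).  The alternating bilinear form `ω` with `ω(e₁,e₃) = 1`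
and all other basis pairings zero is a 2-cocycle with trivial coefficients `ℝ`
which is not a coboundary; in particular `H²(h,ℝ) ≠ {0}`. -/
theorem stmt_6 (H : Type) [LieRing H] [LieAlgebra ℝ H]
    (b : Module.Basis (Fin 4) ℝ H)
    (h12 : ⁅b 0, b 1⁆ = b 1) (h34 : ⁅b 2, b 3⁆ = b 3)
    (h13 : ⁅b 0, b 2⁆ = 0) (h14 : ⁅b 0, b 3⁆ = 0)
    (h23 : ⁅b 1, b 2⁆ = 0) (h24 : ⁅b 1, b 3⁆ = 0)
    (ω : H →ₗ[ℝ] H →ₗ[ℝ] ℝ) (halt : ∀ x : H, ω x x = 0)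
    (hω13 : ω (b 0) (b 2) = 1)
    (hω12 : ω (b 0) (b 1) = 0) (hω14 : ω (b 0) (b 3) = 0)
    (hω23 : ω (b 1) (b 2) = 0) (hω24 : ω (b 1) (b 3) = 0)
    (hω34 : ω (b 2) (b 3) = 0) :
    (∀ x y z : H, ω ⁅x, y⁆ z + ω ⁅y, z⁆ x + ω ⁅z, x⁆ y = 0) ∧
    ¬ ∃ c : H →ₗ[ℝ] ℝ, ∀ x y : H, ω x y = c ⁅x, y⁆ := by
  -- skew-symmetry of ω
  have hskew : ∀ x y : H, ω x y = - ω y x := by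
    intro x y
    have h := halt (x + y)
    simp only [map_add, LinearMap.add_apply, halt x, halt y] at h
    linarith
  set S : Submodule ℝ H := Submodule.span ℝ {b 1, b 3} with hS
  -- ω vanishes when the first argument is b 1 or b 3
  have hω1 : ω (b 1) = 0 := by
    apply b.ext
    intro i
    fin_cases i
    · show ω (b 1) (b 0) = (0 : H →ₗ[ℝ] ℝ) (b 0)
      rw [hskew, hω12]; simp
    · show ω (b 1) (b 1) = (0 : H →ₗ[ℝ] ℝ) (b 1)
      rw [halt]; simp
    · show ω (b 1) (b 2) = (0 : H →ₗ[ℝ] ℝ) (b 2)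
      rw [hω23]; simp
    · show ω (b 1) (b 3) = (0 : H →ₗ[ℝ] ℝ) (b 3)
      rw [hω24]; simp
  have hω3 : ω (b 3) = 0 := by
    apply b.ext
    intro i
    fin_cases i
    · show ω (b 3) (b 0) = (0 : H →ₗ[ℝ] ℝ) (b 0)
      rw [hskew, hω14]; simp
    · show ω (b 3) (b 1) = (0 : H →ₗ[ℝ] ℝ) (b 1)
      rw [hskew, hω24]; simp
    · show ω (b 3) (b 2) = (0 : H →ₗ[ℝ] ℝ) (b 2)
      rw [hskew, hω34]; simp
    · show ω (b 3) (b 3) = (0 : H →ₗ[ℝ] ℝ) (b 3)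
      rw [halt]; simp
  have hωS : ∀ v ∈ S, ω v = 0 := by
    intro v hv
    induction hv using Submodule.span_induction with
    | mem x hx =>
        rcases hx with h | h
        · rw [h]; exact hω1
        · rw [Set.mem_singleton_iff] at h; rw [h]; exact hω3
    | zero => simp
    | add x y _ _ hx hy => simp [map_add, hx, hy]
    | smul a x _ hx => simp [map_smul, hx]
  have hmem1 : (b 1) ∈ S := Submodule.subset_span (by simp)
  have hmem3 : (b 3) ∈ S := Submodule.subset_span (by simp)
  -- all basis brackets lie in S
  have hb : ∀ i j : Fin 4, ⁅b i, b j⁆ ∈ S := by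
    intro i j
    fin_cases i <;> fin_cases j <;>
      first
      | (show ⁅b 0, b 0⁆ ∈ S; rw [lie_self]; exact S.zero_mem)
      | (show ⁅b 1, b 1⁆ ∈ S; rw [lie_self]; exact S.zero_mem)
      | (show ⁅b 2, b 2⁆ ∈ S; rw [lie_self]; exact S.zero_mem)
      | (show ⁅b 3, b 3⁆ ∈ S; rw [lie_self]; exact S.zero_mem)
      | (show ⁅b 0, b 1⁆ ∈ S; rw [h12]; exact hmem1)
      | (show ⁅b 0, b 2⁆ ∈ S; rw [h13]; exact S.zero_mem)
      | (show ⁅b 0, b 3⁆ ∈ S; rw [h14]; exact S.zero_mem)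
      | (show ⁅b 1, b 2⁆ ∈ S; rw [h23]; exact S.zero_mem)
      | (show ⁅b 1, b 3⁆ ∈ S; rw [h24]; exact S.zero_mem)
      | (show ⁅b 2, b 3⁆ ∈ S; rw [h34]; exact hmem3)
      | (show ⁅b 1, b 0⁆ ∈ S; rw [← lie_skew, h12]; exact S.neg_mem hmem1)
      | (show ⁅b 2, b 0⁆ ∈ S; rw [← lie_skew, h13]; simpa using S.zero_mem)
      | (show ⁅b 3, b 0⁆ ∈ S; rw [← lie_skew, h14]; simpa using S.zero_mem)
      | (show ⁅b 2, b 1⁆ ∈ S; rw [← lie_skew, h23]; simpa using S.zero_mem)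
      | (show ⁅b 3, b 1⁆ ∈ S; rw [← lie_skew, h24]; simpa using S.zero_mem)
      | (show ⁅b 3, b 2⁆ ∈ S; rw [← lie_skew, h34]; exact S.neg_mem hmem3)
  -- all brackets lie in S
  have hmem : ∀ x y : H, ⁅x, y⁆ ∈ S := by
    intro x y
    have hx := b.sum_repr x
    have hy := b.sum_repr y
    set A : H →ₗ[ℝ] Module.End ℝ H := LinearMap.mk₂ ℝ (fun u v : H => ⁅u, v⁆) add_lie smul_lie lie_add lie_smul with hAdef
    have hA : ∀ u v : H, A u v = ⁅u, v⁆ := fun u v => rfl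
    rw [← hA, ← hx, map_sum, LinearMap.sum_apply]
    refine S.sum_mem fun i _ => ?_
    rw [map_smul, LinearMap.smul_apply]
    refine S.smul_mem _ ?_
    rw [← hy, map_sum]
    refine S.sum_mem fun j _ => ?_
    rw [map_smul]
    refine S.smul_mem _ ?_
    rw [hA]
    exact hb i j
  have hzero : ∀ x y z : H, ω ⁅x, y⁆ z = 0 := by
    intro x y z
    rw [hωS _ (hmem x y)]
    simp
  constructor
  · intro x y z
    rw [hzero, hzero, hzero]; ring
  · rintro ⟨c, hc⟩
    have h := hc (b 0) (b 2)
    rw [h13, hω13, map_zero] at h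
    exact one_ne_zero h
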